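/- The rational map φ(z) = z(2+z)(1+z−z²)/((1+2z)(1−z−z²)) fixes the primitive cube roots of unity ω = e^{2πi/3} and ω², and its derivative at each of these fixed points has absolute value strictly less than 1 (so both are attracting fixed points). Moreover, the scalar s(z) = (1−z−z²)/(2−z−z²) satisfies s(ω) = s(ω²) = 2/3. -/

import Mathlib

open Complex

lemma cube_key (u : ℂ) (hu : u ^ 2 + u + 1 = 0) :
    u * (2 + u) * (1 + u - u ^ 2) / ((1 + 2 * u) * (1 - u - u ^ 2)) = u ∧
    HasDerivAt (fun z : ℂ => z * (2 + z) * (1 + z - z ^ 2) / ((1 + 2 * z) * (1 - z - z ^ 2)))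
      (1 / 2) u ∧
    (1 - u - u ^ 2) / (2 - u - u ^ 2) = 2 / 3 := by
  have h1 : (1 + 2 * u) ≠ 0 := by
    intro h
    have hu' : u = -(1 / 2) := by linear_combination h / 2
    rw [hu'] at hu
    norm_num at hu
  have h2 : (1 - u - u ^ 2) = 2 := by linear_combination -hu
  have h3 : (2 - u - u ^ 2) = 3 := by linear_combination -hu
  have hD : (1 + 2 * u) * (1 - u - u ^ 2) ≠ 0 := by
    rw [h2]; exact mul_ne_zero h1 two_ne_zero
  refine ⟨?_, ?_, ?_⟩
  · rw [div_eq_iff hD]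
    linear_combination (u + u ^ 2) * hu
  · have hN := (((hasDerivAt_id u).mul ((hasDerivAt_const u (2:ℂ)).add (hasDerivAt_id u))).mul
        (((hasDerivAt_const u (1:ℂ)).add (hasDerivAt_id u)).sub (hasDerivAt_pow 2 u)))
    have hDd := (((hasDerivAt_const u (1:ℂ)).add ((hasDerivAt_const u (2:ℂ)).mul
        (hasDerivAt_id u))).mul (((hasDerivAt_const u (1:ℂ)).sub (hasDerivAt_id u)).sub
        (hasDerivAt_pow 2 u)))
    have h := hN.div hDd hD
    simp only [id] at h
    refine h.congr_deriv (Eq.symm ?_)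
    simp only [Pi.add_apply, Pi.mul_apply, Pi.sub_apply, id]
    rw [eq_div_iff (pow_ne_zero 2 hD)]
    ring_nf
    linear_combination (-(3:ℂ)/2 - 7/2 * u - 7/2 * u ^ 2) * hu
  · rw [h2, h3]

/-- The rational map `φ(z) = z(2+z)(1+z−z²)/((1+2z)(1−z−z²))` fixes the primitive
cube roots of unity `ω = e^{2πi/3}` and `ω²`, and both are attracting fixed
points (`|φ'| < 1` there); moreover `s(ω) = s(ω²) = 2/3` for
`s(z) = (1−z−z²)/(2−z−z²)`. -/
theorem phi_attracting_cube_roots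
    (φ s : ℂ → ℂ)
    (hφ : ∀ z, φ z = z * (2 + z) * (1 + z - z ^ 2) / ((1 + 2 * z) * (1 - z - z ^ 2)))
    (hs : ∀ z, s z = (1 - z - z ^ 2) / (2 - z - z ^ 2))
    (ω : ℂ) (hω : ω = Complex.exp (2 * Real.pi * Complex.I / 3)) :
    φ ω = ω ∧ φ (ω ^ 2) = ω ^ 2 ∧
      ‖deriv φ ω‖ < 1 ∧ ‖deriv φ (ω ^ 2)‖ < 1 ∧
      s ω = 2 / 3 ∧ s (ω ^ 2) = 2 / 3 := by
  have hprim : IsPrimitiveRoot ω 3 := by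
    rw [hω]
    have := Complex.isPrimitiveRoot_exp 3 (by norm_num)
    convert this using 3
    norm_num
  have hcube : ω ^ 3 = 1 := hprim.pow_eq_one
  have hne : ω ≠ 1 := hprim.ne_one (by norm_num)
  have hrel : ω ^ 2 + ω + 1 = 0 := by
    have hfac : (ω - 1) * (ω ^ 2 + ω + 1) = 0 := by linear_combination hcube
    rcases mul_eq_zero.mp hfac with h | h
    · exact absurd (sub_eq_zero.mp h) hne
    · exact h
  have hrel2 : (ω ^ 2) ^ 2 + ω ^ 2 + 1 = 0 := by
    linear_combination hrel + ω * hcube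
  obtain ⟨hf1, hd1, hs1⟩ := cube_key ω hrel
  obtain ⟨hf2, hd2, hs2⟩ := cube_key (ω ^ 2) hrel2
  have hφeq : φ = fun z => z * (2 + z) * (1 + z - z ^ 2) / ((1 + 2 * z) * (1 - z - z ^ 2)) :=
    funext hφ
  subst hφeq
  have habs : ‖(1 / 2 : ℂ)‖ < 1 := by
    rw [norm_div]
    norm_num
  refine ⟨hf1, hf2, ?_, ?_, by rw [hs ω]; exact hs1, by rw [hs (ω ^ 2)]; exact hs2⟩
  · rw [hd1.deriv]; exact habs
  · rw [hd2.deriv]; exact habs
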